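/- For any N points z_1,…,z_N on S¹, the discrete energy (1/N²)∑_{i,j=1}^N arccos|z_i·z_j| is at most π/4; moreover, if N is odd the energy is at most (π/4)·(N²−1)/N². -/

import Mathlib

open RealInnerProductSpace Real Finset


private def eps (N g : ℕ) : ℤ := if 2*g < N then 1 else if 2*g = N then 0 else -1

private def Esum (N m : ℕ) : ℤ := ∑ g ∈ Finset.range m, eps N (g+1)

private lemma Emin (N : ℕ) : ∀ m, m < N → Esum N m = min (m:ℤ) ((N:ℤ)-1-m) := by
  intro m
  induction m with
  | zero => intro h; simp [Esum]; omega
  | succ m ih =>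
    intro h
    have hm : m < N := by omega
    rw [Esum, Finset.sum_range_succ, ← Esum, ih hm]
    unfold eps
    split_ifs <;> push_cast <;> omega

private lemma Esymm (N m : ℕ) (h : m < N) : Esum N m = Esum N (N-1-m) := by
  rw [Emin N m h, Emin N (N-1-m) (by omega)]
  have : ((N-1-m : ℕ) : ℤ) = (N:ℤ)-1-m := by omega
  rw [this]; omega

private lemma gauss (n : ℕ) : (∑ m ∈ Finset.range n, (m:ℤ)) * 2 = n * ((n:ℤ)-1) := by
  induction n with
  | zero => simp
  | succ n ih => rw [Finset.sum_range_succ]; push_cast; ring_nf; ring_nf at ih; linarith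

private lemma sum_Esum (N : ℕ) :
    4 * ∑ m ∈ Finset.range N, Esum N m = (N:ℤ)^2 - 2*N + (N % 2 : ℕ) := by
  have h1 : ∑ m ∈ Finset.range N, Esum N m
      = ∑ m ∈ Finset.range N, min (m:ℤ) ((N:ℤ)-1-m) := by
    apply Finset.sum_congr rfl
    intro m hm
    exact Emin N m (Finset.mem_range.mp hm)
  rw [h1]
  set h := N / 2 with hh
  have hhle : h ≤ N := Nat.div_le_self _ _
  have hsplit : Finset.range N = Finset.Ico 0 h ∪ Finset.Ico h N := by
    rw [Finset.range_eq_Ico, Finset.Ico_union_Ico_eq_Ico (by omega) hhle]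
  rw [hsplit, Finset.sum_union (Finset.Ico_disjoint_Ico_consecutive _ _ _)]
  have e1 : ∑ m ∈ Finset.Ico 0 h, min (m:ℤ) ((N:ℤ)-1-m) = ∑ m ∈ Finset.range h, (m:ℤ) := by
    rw [← Finset.range_eq_Ico]
    apply Finset.sum_congr rfl
    intro m hm
    have := Finset.mem_range.mp hm
    have : 2*m < N := by omega
    omega
  have e2 : ∑ m ∈ Finset.Ico h N, min (m:ℤ) ((N:ℤ)-1-m)
      = ∑ k ∈ Finset.range (N - h), ((N:ℤ)-1-h-k) := by
    rw [Finset.sum_Ico_eq_sum_range]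
    apply Finset.sum_congr rfl
    intro k hk
    have := Finset.mem_range.mp hk
    have h2 : 2*(h+k) ≥ N - 1 := by omega
    push_cast
    omega
  have e3 : ∑ k ∈ Finset.range (N - h), ((N:ℤ)-1-h-k) = ∑ k ∈ Finset.range (N-h), (k:ℤ) := by
    have := Finset.sum_range_reflect (fun k => (k:ℤ)) (N - h)
    rw [← this]
    apply Finset.sum_congr rfl
    intro k hk
    have := Finset.mem_range.mp hk
    omega
  have g1 := gauss h
  have g2 := gauss (N - h)
  have hnh : ((N - h : ℕ) : ℤ) = (N:ℤ) - h := by omega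
  rw [hnh] at g2
  rw [e1, e2, e3]
  have hr2 : N % 2 = 0 ∨ N % 2 = 1 := by omega
  rcases hr2 with hr2 | hr2 <;> rw [hr2] <;>
    [ (have hN : (N:ℤ) = 2*h := by omega);
      (have hN : (N:ℤ) = 2*h + 1 := by omega)] <;> push_cast
  · linear_combination 2*g1 + 2*g2 + ((N:ℤ)-2*(h:ℤ))*hN
  · linear_combination 2*g1 + 2*g2 + ((N:ℤ)-2*(h:ℤ)+1)*hN


private lemma arccos_anti {x y : ℝ} (h : x ≤ y) : Real.arccos y ≤ Real.arccos x := by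
  unfold Real.arccos
  have := Real.monotone_arcsin h
  linarith

private lemma arccos_abs_cos_le {u : ℝ} (h : |u| ≤ Real.pi) : Real.arccos |Real.cos u| ≤ |u| := by
  have h1 : Real.cos u ≤ |Real.cos u| := le_abs_self _
  have h2 : Real.cos |u| = Real.cos u := by
    rcases abs_cases u with ⟨h3, _⟩ | ⟨h3, _⟩ <;> rw [h3] <;> simp [Real.cos_neg]
  calc Real.arccos |Real.cos u| ≤ Real.arccos (Real.cos |u|) := by
        apply arccos_anti; rw [h2]; exact h1
    _ = |u| := Real.arccos_cos (abs_nonneg u) h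

private lemma arccos_abs_cos_le_pi_sub {u : ℝ} (h : |u| ≤ Real.pi) :
    Real.arccos |Real.cos u| ≤ Real.pi - |u| := by
  have h2 : Real.cos |u| = Real.cos u := by
    rcases abs_cases u with ⟨h3, _⟩ | ⟨h3, _⟩ <;> rw [h3] <;> simp [Real.cos_neg]
  have h1 : Real.cos (Real.pi - |u|) ≤ |Real.cos u| := by
    rw [Real.cos_pi_sub, h2]
    have := neg_abs_le (Real.cos u)
    linarith
  calc Real.arccos |Real.cos u| ≤ Real.arccos (Real.cos (Real.pi - |u|)) := arccos_anti h1
    _ = Real.pi - |u| := Real.arccos_cos (by linarith [abs_nonneg u]) (by linarith [abs_nonneg u])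

private lemma arccos_abs_cos_le_half (u : ℝ) : Real.arccos |Real.cos u| ≤ Real.pi / 2 :=
  Real.arccos_le_pi_div_two.mpr (abs_nonneg _)

private lemma abs_cos_add_int_mul_pi (x : ℝ) (n : ℤ) : |Real.cos (x + n * Real.pi)| = |Real.cos x| := by
  rw [Real.cos_add, Real.sin_int_mul_pi]
  have hc : |Real.cos ((n:ℝ) * Real.pi)| = 1 := by
    have hs := Real.sin_int_mul_pi n
    have hpy := Real.sin_sq_add_cos_sq ((n:ℝ) * Real.pi)
    rw [hs] at hpy
    have h3 : (|Real.cos ((n:ℝ)*Real.pi)| - 1) * (|Real.cos ((n:ℝ)*Real.pi)| + 1) = 0 := by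
      have : |Real.cos ((n:ℝ)*Real.pi)|^2 = 1 := by rw [sq_abs]; nlinarith
      nlinarith
    rcases mul_eq_zero.mp h3 with h | h
    · linarith
    · have := abs_nonneg (Real.cos ((n:ℝ)*Real.pi)); linarith
  rw [mul_zero, sub_zero, abs_mul, hc, mul_one]

private lemma double_sum_eq (N : ℕ) (F : ℕ → ℕ → ℝ)
    (hsymm : ∀ i j, F i j = F j i) (hdiag : ∀ i, F i i = 0) :
    ∑ i ∈ Finset.range N, ∑ j ∈ Finset.range N, F i j
      = 2 * ∑ j ∈ Finset.range N, ∑ i ∈ Finset.range j, F i j := by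
  induction N with
  | zero => simp
  | succ n ih =>
    rw [Finset.sum_range_succ, Finset.sum_range_succ (fun j => ∑ i ∈ Finset.range j, F i j)]
    have step : ∀ i, ∑ j ∈ Finset.range (n+1), F i j = (∑ j ∈ Finset.range n, F i j) + F i n :=
      fun i => Finset.sum_range_succ _ _
    rw [Finset.sum_congr rfl (fun i _ => step i), Finset.sum_add_distrib, ih,
      Finset.sum_range_succ (F n) n]
    have hswap : ∑ j ∈ Finset.range n, F n j = ∑ i ∈ Finset.range n, F i n := by
      exact Finset.sum_congr rfl (fun j _ => hsymm n j)
    rw [hswap, hdiag n]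
    ring

private lemma tri_swap (N : ℕ) (G : ℕ → ℕ → ℝ) :
    ∑ j ∈ Finset.range N, ∑ i ∈ Finset.range j, G i j
      = ∑ i ∈ Finset.range N, ∑ j ∈ Finset.Ico (i+1) N, G i j := by
  induction N with
  | zero => simp
  | succ n ih =>
    rw [Finset.sum_range_succ, ih, Finset.sum_range_succ]
    have h1 : ∀ i, i ∈ Finset.range n → ∑ j ∈ Finset.Ico (i+1) (n+1), G i j
        = (∑ j ∈ Finset.Ico (i+1) n, G i j) + G i n := by
      intro i hi
      have := Finset.mem_range.mp hi
      rw [Finset.sum_Ico_succ_top (by omega)]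
    rw [Finset.sum_congr rfl h1, Finset.sum_add_distrib]
    simp


private lemma inner_reindex (N : ℕ) (j : ℕ) :
    ∑ i ∈ Finset.range j, ((eps N (j-i) : ℤ) : ℝ) = ((Esum N j : ℤ) : ℝ) := by
  have h := Finset.sum_range_reflect (fun g => ((eps N (g+1) : ℤ) : ℝ)) j
  rw [Esum]
  push_cast
  rw [← h]
  apply Finset.sum_congr rfl
  intro i hi
  have := Finset.mem_range.mp hi
  have : j - 1 - i + 1 = j - i := by omega
  rw [this]

private lemma ico_reindex (N : ℕ) (i : ℕ) (hi : i < N) :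
    ∑ j ∈ Finset.Ico (i+1) N, ((eps N (j-i) : ℤ) : ℝ) = ((Esum N (N-1-i) : ℤ) : ℝ) := by
  rw [Finset.sum_Ico_eq_sum_range, Esum]
  push_cast
  have hn : N - (i+1) = N - 1 - i := by omega
  rw [hn]
  apply Finset.sum_congr rfl
  intro k hk
  have : i + 1 + k - i = k + 1 := by omega
  rw [this]

private lemma eps_cases (N g : ℕ) : eps N g = 1 ∨ eps N g = 0 ∨ eps N g = -1 := by
  unfold eps; split_ifs <;> simp

private lemma core (N : ℕ) (β : ℕ → ℝ)
    (hmono : ∀ i j, i ≤ j → j < N → β i ≤ β j)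
    (h0 : ∀ k, k < N → 0 ≤ β k) (h1 : ∀ k, k < N → β k < Real.pi) :
    ∑ i ∈ Finset.range N, ∑ j ∈ Finset.range N, Real.arccos |Real.cos (β i - β j)| ≤
      Real.pi / 4 * ((N:ℝ)^2 - (N % 2 : ℕ)) := by
  have hπ := Real.pi_pos
  rw [double_sum_eq N _ (fun i j => by rw [← Real.cos_neg (β i - β j), neg_sub])
      (fun i => by simp)]
  -- bound the triangle sum
  have key : ∀ j ∈ Finset.range N, ∑ i ∈ Finset.range j, Real.arccos |Real.cos (β i - β j)|
      ≤ ∑ i ∈ Finset.range j,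
        (Real.pi/2 * (1 - ((eps N (j-i) : ℤ) : ℝ)) + ((eps N (j-i) : ℤ) : ℝ) * (β j - β i)) := by
    intro j hj
    have hjN := Finset.mem_range.mp hj
    apply Finset.sum_le_sum
    intro i hi
    have hij := Finset.mem_range.mp hi
    have hiN : i < N := by omega
    have hba : 0 ≤ β j - β i := by have := hmono i j (by omega) hjN; linarith
    have habs : |β i - β j| = β j - β i := by rw [abs_sub_comm, abs_of_nonneg hba]
    have hlt : β j - β i ≤ Real.pi := by
      have := h1 j hjN; have := h0 i hiN; linarith
    rcases eps_cases N (j-i) with h | h | h <;> rw [h] <;> push_cast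
    · have := arccos_abs_cos_le (u := β i - β j) (by rw [habs]; exact hlt)
      rw [habs] at this; linarith
    · have := arccos_abs_cos_le_half (β i - β j); linarith
    · have := arccos_abs_cos_le_pi_sub (u := β i - β j) (by rw [habs]; exact hlt)
      rw [habs] at this; linarith
  have step1 := Finset.sum_le_sum key
  -- split the RHS
  have split : ∑ j ∈ Finset.range N, ∑ i ∈ Finset.range j,
      (Real.pi/2 * (1 - ((eps N (j-i) : ℤ) : ℝ)) + ((eps N (j-i) : ℤ) : ℝ) * (β j - β i))
      = (∑ j ∈ Finset.range N, (Real.pi/2 * ((j:ℝ) - ((Esum N j : ℤ) : ℝ))))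
        + ∑ j ∈ Finset.range N, ∑ i ∈ Finset.range j, ((eps N (j-i) : ℤ) : ℝ) * (β j - β i) := by
    rw [← Finset.sum_add_distrib]
    apply Finset.sum_congr rfl
    intro j hj
    rw [Finset.sum_add_distrib]
    congr 1
    rw [← Finset.mul_sum, Finset.sum_sub_distrib, inner_reindex N j]
    simp
  -- cancellation of the linear part
  have cancel : ∑ j ∈ Finset.range N, ∑ i ∈ Finset.range j, ((eps N (j-i) : ℤ) : ℝ) * (β j - β i) = 0 := by
    have e1 : ∀ j, ∑ i ∈ Finset.range j, ((eps N (j-i) : ℤ) : ℝ) * (β j - β i)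
        = (((Esum N j : ℤ) : ℝ) * β j) - ∑ i ∈ Finset.range j, ((eps N (j-i) : ℤ) : ℝ) * β i := by
      intro j
      simp only [mul_sub]
      rw [Finset.sum_sub_distrib, ← Finset.sum_mul, inner_reindex N j]
    rw [Finset.sum_congr rfl (fun j _ => e1 j), Finset.sum_sub_distrib]
    have e2 : ∑ j ∈ Finset.range N, ∑ i ∈ Finset.range j, ((eps N (j-i) : ℤ) : ℝ) * β i
        = ∑ i ∈ Finset.range N, ((Esum N (N-1-i) : ℤ) : ℝ) * β i := by
      rw [tri_swap N]
      apply Finset.sum_congr rfl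
      intro i hi
      rw [← Finset.sum_mul, ico_reindex N i (Finset.mem_range.mp hi)]
    have e3 : ∑ i ∈ Finset.range N, ((Esum N (N-1-i) : ℤ) : ℝ) * β i
        = ∑ i ∈ Finset.range N, ((Esum N i : ℤ) : ℝ) * β i :=
      Finset.sum_congr rfl (fun i hi => by rw [← Esymm N i (Finset.mem_range.mp hi)])
    rw [e2, e3]
    exact sub_self _
  have hgR : (∑ m ∈ Finset.range N, (m:ℝ)) * 2 = N * ((N:ℝ)-1) := by
    have h := gauss N
    have h2 : ((( ∑ m ∈ Finset.range N, (m:ℤ)) * 2 : ℤ) : ℝ) = (((N : ℤ) * ((N:ℤ)-1) : ℤ) : ℝ) := by exact_mod_cast h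
    push_cast at h2
    linarith
  have hER : 4 * ∑ m ∈ Finset.range N, ((Esum N m : ℤ) : ℝ) = (N:ℝ)^2 - 2*N + ((N % 2 : ℕ) : ℝ) := by
    have h := sum_Esum N
    have h2 : ((4 * ∑ m ∈ Finset.range N, Esum N m : ℤ) : ℝ) = (((N:ℤ)^2 - 2*N + (N % 2 : ℕ) : ℤ) : ℝ) := by exact_mod_cast h
    have hmod : ((N % 2 : ℕ) : ℤ) = (N:ℤ) % 2 := by omega
    push_cast [hmod] at h2
    have hmod2 : (((N:ℤ) % 2 : ℤ) : ℝ) = ((N % 2 : ℕ) : ℝ) := by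
      rw [← hmod]; norm_cast
    rw [hmod2] at h2
    linarith
  have hA : ∑ j ∈ Finset.range N, Real.pi/2 * ((j:ℝ) - ((Esum N j : ℤ):ℝ))
      = Real.pi/8 * ((N:ℝ)^2 - ((N % 2 : ℕ) : ℝ)) := by
    rw [← Finset.mul_sum, Finset.sum_sub_distrib]
    linear_combination (Real.pi/4) * hgR - (Real.pi/8) * hER
  rw [split, cancel, add_zero, hA] at step1
  linarith

private lemma exists_angle (x y : ℝ) (h : x^2 + y^2 = 1) :
    ∃ θ : ℝ, Real.cos θ = x ∧ Real.sin θ = y := by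
  have hx1 : -1 ≤ x := by nlinarith
  have hx2 : x ≤ 1 := by nlinarith
  have hsq : Real.sqrt (1 - x^2) = |y| := by
    rw [show (1:ℝ) - x^2 = y^2 by linarith, Real.sqrt_sq_eq_abs]
  rcases le_or_gt 0 y with hy | hy
  · exact ⟨Real.arccos x, Real.cos_arccos hx1 hx2, by
      rw [Real.sin_arccos, hsq, abs_of_nonneg hy]⟩
  · exact ⟨-Real.arccos x, by rw [Real.cos_neg]; exact Real.cos_arccos hx1 hx2, by
      rw [Real.sin_neg, Real.sin_arccos, hsq, abs_of_neg hy, neg_neg]⟩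

theorem stmt_14 (N : ℕ) (hN : 0 < N) (z : Fin N → EuclideanSpace ℝ (Fin 2))
    (hz : ∀ i, ‖z i‖ = 1) :
    (1 / (N : ℝ) ^ 2) * ∑ i, ∑ j, Real.arccos |⟪z i, z j⟫| ≤ Real.pi / 4 ∧
    (Odd N → (1 / (N : ℝ) ^ 2) * ∑ i, ∑ j, Real.arccos |⟪z i, z j⟫| ≤
      Real.pi / 4 * (((N : ℝ) ^ 2 - 1) / (N : ℝ) ^ 2)) := by
  have hπ := Real.pi_pos
  have hcoord : ∀ i, (z i 0)^2 + (z i 1)^2 = 1 := by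
    intro i
    have h := hz i
    rw [EuclideanSpace.norm_eq] at h
    have h3 : ∑ j, ‖z i j‖^2 = 1 := Real.sqrt_eq_one.mp h
    rw [Fin.sum_univ_two] at h3
    simpa [Real.norm_eq_abs, sq_abs] using h3
  choose θ hθc hθs using fun i => exists_angle _ _ (hcoord i)
  have hinner : ∀ i j, ⟪z i, z j⟫ = Real.cos (θ i - θ j) := by
    intro i j
    rw [PiLp.inner_apply, Fin.sum_univ_two]
    simp only [RCLike.inner_apply, starRingEnd_apply, star_trivial]
    rw [← hθc i, ← hθs i, ← hθc j, ← hθs j, Real.cos_sub]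
    ring
  set α : Fin N → ℝ := fun i => Real.pi * Int.fract (θ i / Real.pi) with hα
  have hα0 : ∀ i, 0 ≤ α i := fun i => mul_nonneg hπ.le (Int.fract_nonneg _)
  have hα1 : ∀ i, α i < Real.pi := fun i => by
    have := Int.fract_lt_one (θ i / Real.pi)
    calc α i < Real.pi * 1 := by
          apply mul_lt_mul_of_pos_left this hπ
      _ = Real.pi := mul_one _
  have hαθ : ∀ i, θ i = α i + (⌊θ i / Real.pi⌋ : ℤ) * Real.pi := by
    intro i
    rw [hα]
    simp only [Int.fract]
    have : Real.pi ≠ 0 := hπ.ne'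
    field_simp
    ring
  have habs : ∀ i j, |⟪z i, z j⟫| = |Real.cos (α i - α j)| := by
    intro i j
    rw [hinner i j]
    have : θ i - θ j = (α i - α j) + ((⌊θ i / Real.pi⌋ - ⌊θ j / Real.pi⌋ : ℤ) : ℝ) * Real.pi := by
      have h1 := hαθ i
      have h2 := hαθ j
      push_cast
      linear_combination h1 - h2
    rw [this, abs_cos_add_int_mul_pi]
  -- sort
  set σ := Tuple.sort α with hσ
  set γ : Fin N → ℝ := α ∘ σ with hγ
  have hγmono : Monotone γ := Tuple.monotone_sort α
  set β : ℕ → ℝ := fun k => if h : k < N then γ ⟨k, h⟩ else 0 with hβ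
  have hβγ : ∀ i : Fin N, β i.val = γ i := by
    intro i
    simp only [hβ, i.isLt, dif_pos]
  have hsum : ∑ i, ∑ j, Real.arccos |⟪z i, z j⟫|
      = ∑ i ∈ Finset.range N, ∑ j ∈ Finset.range N, Real.arccos |Real.cos (β i - β j)| := by
    have s1 : ∑ i, ∑ j, Real.arccos |⟪z i, z j⟫|
        = ∑ i, ∑ j, Real.arccos |Real.cos (α i - α j)| := by
      apply Finset.sum_congr rfl; intro i _
      apply Finset.sum_congr rfl; intro j _
      rw [habs i j]
    have s2 : ∑ i, ∑ j, Real.arccos |Real.cos (α i - α j)|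
        = ∑ i, ∑ j, Real.arccos |Real.cos (γ i - γ j)| := by
      have inner_eq : ∀ c : ℝ, ∑ j, Real.arccos |Real.cos (c - γ j)|
          = ∑ j, Real.arccos |Real.cos (c - α j)| :=
        fun c => Equiv.sum_comp σ (fun j => Real.arccos |Real.cos (c - α j)|)
      have outer := Equiv.sum_comp σ (fun i => ∑ j, Real.arccos |Real.cos (α i - α j)|)
      calc ∑ i, ∑ j, Real.arccos |Real.cos (α i - α j)|
          = ∑ i, ∑ j, Real.arccos |Real.cos (α (σ i) - α j)| := outer.symm
        _ = ∑ i, ∑ j, Real.arccos |Real.cos (γ i - γ j)| := by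
            apply Finset.sum_congr rfl; intro i _
            exact (inner_eq (γ i)).symm
    have s3 : ∑ i, ∑ j, Real.arccos |Real.cos (γ i - γ j)|
        = ∑ i ∈ Finset.range N, ∑ j ∈ Finset.range N, Real.arccos |Real.cos (β i - β j)| := by
      rw [← Fin.sum_univ_eq_sum_range (fun i => ∑ j ∈ Finset.range N, Real.arccos |Real.cos (β i - β j)|) N]
      apply Finset.sum_congr rfl; intro i _
      rw [← Fin.sum_univ_eq_sum_range (fun j => Real.arccos |Real.cos (β i.val - β j)|) N]
      apply Finset.sum_congr rfl; intro j _
      rw [hβγ i, hβγ j]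
    rw [s1, s2, s3]
  have hcore := core N β
    (by
      intro i j hij hjN
      have hiN : i < N := lt_of_le_of_lt hij hjN
      simp only [hβ, dif_pos hiN, dif_pos hjN]
      exact hγmono (by exact hij))
    (by
      intro k hk
      simp only [hβ, dif_pos hk]
      exact hα0 _)
    (by
      intro k hk
      simp only [hβ, dif_pos hk]
      exact hα1 _)
  rw [hsum]
  set S := ∑ i ∈ Finset.range N, ∑ j ∈ Finset.range N, Real.arccos |Real.cos (β i - β j)| with hS
  have hN2 : (0:ℝ) < (N:ℝ)^2 := by positivity
  constructor
  · have h2 : S ≤ Real.pi / 4 * ((N:ℝ)^2) := by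
      have : (0:ℝ) ≤ ((N % 2 : ℕ) : ℝ) := by positivity
      nlinarith
    rw [div_eq_mul_inv, one_mul] at *
    calc ((N:ℝ)^2)⁻¹ * S ≤ ((N:ℝ)^2)⁻¹ * (Real.pi / 4 * (N:ℝ)^2) := by
          apply mul_le_mul_of_nonneg_left h2 (by positivity)
      _ = Real.pi / 4 := by field_simp
  · intro hodd
    have hr : N % 2 = 1 := Nat.odd_iff.mp hodd
    rw [hr] at hcore
    norm_num at hcore
    calc (1 / (N:ℝ)^2) * S ≤ (1 / (N:ℝ)^2) * (Real.pi / 4 * ((N:ℝ)^2 - 1)) := by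
          apply mul_le_mul_of_nonneg_left hcore (by positivity)
      _ = Real.pi / 4 * (((N:ℝ)^2 - 1) / (N:ℝ)^2) := by ring
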